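/- There is a unique anti-automorphism `bar` of the coordinate algebra O_q(M(n)) of n×n quantum matrices, as an algebra over ℚ, satisfying bar(Z_ij) = Z_ij for all 1 ≤ i,j ≤ n and bar(q·x) = q^{-1}·bar(x) for all x (i.e. bar is semilinear over the ℚ-field automorphism of ℚ(q) sending q to q^{-1}); moreover bar is an involution. -/

import Mathlib

noncomputable section

/-- The base field `K = ℚ(q)`, the field of rational functions in `q` over `ℚ`. -/
abbrev KK : Type := RatFunc ℚ

/-- The indeterminate `q ∈ ℚ(q)`. -/
def qq : KK := RatFunc.X

/-- The defining relations of the coordinate algebra `O_q(M(n))` of `n × n`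
quantum matrices, as relations on the free algebra on the generators `Z_{ij}`. -/
inductive QMRel (n : ℕ) : FreeAlgebra KK (Fin n × Fin n) → FreeAlgebra KK (Fin n × Fin n) → Prop
  | row (i : Fin n) {j k : Fin n} (h : j < k) :
      QMRel n (FreeAlgebra.ι KK (i, j) * FreeAlgebra.ι KK (i, k))
        ((qq ^ 2) • (FreeAlgebra.ι KK (i, k) * FreeAlgebra.ι KK (i, j)))
  | col (j : Fin n) {i k : Fin n} (h : i < k) :
      QMRel n (FreeAlgebra.ι KK (i, j) * FreeAlgebra.ι KK (k, j))
        ((qq ^ 2) • (FreeAlgebra.ι KK (k, j) * FreeAlgebra.ι KK (i, j)))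
  | swap {i j s t : Fin n} (h1 : s < i) (h2 : j < t) :
      QMRel n (FreeAlgebra.ι KK (i, j) * FreeAlgebra.ι KK (s, t))
        (FreeAlgebra.ι KK (s, t) * FreeAlgebra.ι KK (i, j))
  | mixed {i j s t : Fin n} (h1 : i < s) (h2 : j < t) :
      QMRel n (FreeAlgebra.ι KK (i, j) * FreeAlgebra.ι KK (s, t))
        (FreeAlgebra.ι KK (s, t) * FreeAlgebra.ι KK (i, j)
          + (qq ^ 2 - qq⁻¹ ^ 2) • (FreeAlgebra.ι KK (i, t) * FreeAlgebra.ι KK (s, j)))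

/-- The coordinate algebra `O_q(M(n))` of `n × n` quantum matrices. -/
abbrev OqM (n : ℕ) : Type := RingQuot (QMRel n)

/-- The generator `Z_{ij}` of `O_q(M(n))` (indices `0`-based). -/
def Zg (n : ℕ) (i j : Fin n) : OqM n :=
  RingQuot.mkAlgHom KK (QMRel n) (FreeAlgebra.ι KK (i, j))

/-- The ordered monomial `Z^A`: the product of the `Z_{ij}^{a_{ij}}` with the factors
arranged in lexicographic order of the positions `(i,j)`. -/
def Zmon {n : ℕ} (A : Matrix (Fin n) (Fin n) ℕ) : OqM n :=
  ((List.finRange n).map (fun i =>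
    ((List.finRange n).map (fun j => Zg n i j ^ A i j)).prod)).prod

/-- Row sums of a matrix. -/
def rosum {n : ℕ} (A : Matrix (Fin n) (Fin n) ℕ) (i : Fin n) : ℕ := ∑ j, A i j

/-- Column sums of a matrix. -/
def cosum {n : ℕ} (A : Matrix (Fin n) (Fin n) ℕ) (j : Fin n) : ℕ := ∑ i, A i j

/-- The exponent `∑_i ∑_{j>k} a_{ij} a_{ik} + ∑_i ∑_{j>k} a_{ji} a_{ki}`. -/
def expD {n : ℕ} (A : Matrix (Fin n) (Fin n) ℕ) : ℕ :=
  (∑ i, ∑ j, ∑ k, if k < j then A i j * A i k else 0) +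
  (∑ i, ∑ j, ∑ k, if k < j then A j i * A k i else 0)

/-- `D(A) = q^{-(∑_i ∑_{j>k} a_{ij}a_{ik} + ∑_i ∑_{j>k} a_{ji}a_{ki})}`. -/
def Dcoef {n : ℕ} (A : Matrix (Fin n) (Fin n) ℕ) : KK := qq ^ (-(expD A : ℤ))

/-- `E(A) = q^{-2(∑_i ∑_{j>k} a_{ij}a_{ik} + ∑_i ∑_{j>k} a_{ji}a_{ki})}` = `D(A)^2`. -/
def Ecoef {n : ℕ} (A : Matrix (Fin n) (Fin n) ℕ) : KK := qq ^ (-(2 * expD A : ℤ))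

/-- The normalized monomial `Z(A) = D(A) Z^A`. -/
def Zcan {n : ℕ} (A : Matrix (Fin n) (Fin n) ℕ) : OqM n := Dcoef A • Zmon A

/-- Lexicographic order on the positions `(i,j)`. -/
def posLt {n : ℕ} (p p' : Fin n × Fin n) : Prop :=
  p.1 < p'.1 ∨ (p.1 = p'.1 ∧ p.2 < p'.2)

/-- Lexicographic order on matrices: entries compared in lexicographic order of
positions. -/
def matLt {n : ℕ} (A B : Matrix (Fin n) (Fin n) ℕ) : Prop :=
  ∃ i j, A i j < B i j ∧ ∀ i' j', posLt (i', j') (i, j) → A i' j' = B i' j'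

/-- Evaluation of an integer polynomial at `q`, giving the image of `ℤ[q]` in `ℚ(q)`. -/
def polyval (p : Polynomial ℤ) : KK := Polynomial.aeval qq p

/-- Membership in `q·ℤ[q] ⊆ ℚ(q)` (polynomials in `q` with zero constant term). -/
def inqZq (c : KK) : Prop := ∃ p : Polynomial ℤ, c = qq * polyval p

/-- Membership in the Laurent polynomial ring `ℤ[q,q⁻¹] ⊆ ℚ(q)`. -/
def inLaurent (c : KK) : Prop := ∃ (p : Polynomial ℤ) (k : ℕ), c = qq⁻¹ ^ k * polyval p

/-- The properties characterizing the bar involution of `O_q(M(n))`: a `ℚ`-linear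
bijective anti-automorphism with `bar(Z_{ij}) = Z_{ij}` and `bar(q·x) = q⁻¹·bar(x)`. -/
def IsBar (n : ℕ) (f : OqM n → OqM n) : Prop :=
  (∀ x y, f (x + y) = f x + f y) ∧
  (∀ x y, f (x * y) = f y * f x) ∧
  (∀ (c : ℚ) (x : OqM n), f ((RatFunc.C c) • x) = (RatFunc.C c) • f x) ∧
  (∀ x : OqM n, f (qq • x) = qq⁻¹ • f x) ∧
  (∀ i j, f (Zg n i j) = Zg n i j) ∧
  Function.Bijective f

/-- Condition (2) of Theorem 3.2: `b(A) = Z(A) + ∑_{B<A} h_B(A) Z(B)` with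
`h_B(A) ∈ qℤ[q]`, `ro(B) = ro(A)`, `co(B) = co(A)`. -/
def CanForm (n : ℕ) (b : Matrix (Fin n) (Fin n) ℕ → OqM n)
    (A : Matrix (Fin n) (Fin n) ℕ) : Prop :=
  ∃ (s : Finset (Matrix (Fin n) (Fin n) ℕ)) (h : Matrix (Fin n) (Fin n) ℕ → KK),
    (∀ B ∈ s, matLt B A ∧ rosum B = rosum A ∧ cosum B = cosum A ∧ inqZq (h B)) ∧
    b A = Zcan A + ∑ B ∈ s, h B • Zcan B

/-- The two conditions of Theorem 3.2 characterizing the basis `B* = {b(A)}`. -/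
def IsCanBasis (n : ℕ) (f : OqM n → OqM n)
    (b : Matrix (Fin n) (Fin n) ℕ → OqM n) : Prop :=
  ∀ A, f (b A) = b A ∧ CanForm n b A

/-- The `ℤ[q]`-lattice `L* = ⊕_A ℤ[q]·Z(A)`, realized as the `ℤ`-span of the
elements `q^k Z(A)`. -/
def Lstar (n : ℕ) : Submodule ℤ (OqM n) :=
  Submodule.span ℤ {x | ∃ (A : Matrix (Fin n) (Fin n) ℕ) (k : ℕ), x = qq ^ k • Zcan A}

/-- The sublattice `q·L* = ⊕_A qℤ[q]·Z(A)`. -/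
def qLstar (n : ℕ) : Submodule ℤ (OqM n) :=
  Submodule.span ℤ {x | ∃ (A : Matrix (Fin n) (Fin n) ℕ) (k : ℕ), x = qq ^ (k + 1) • Zcan A}

/-- The number of inversions (the length) of a permutation. -/
def invCount {m : ℕ} (σ : Equiv.Perm (Fin m)) : ℕ :=
  (Finset.univ.filter (fun p : Fin m × Fin m => p.1 < p.2 ∧ σ p.2 < σ p.1)).card

/-- The quantum minor `det_q(I,J) = ∑_{σ ∈ S_m} (-q²)^{ℓ(σ)} Z_{i_1 j_{σ(1)}} ⋯ Z_{i_m j_{σ(m)}}`,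
for `I, J` given by (strictly monotone) enumerations `ii, jj : Fin m → Fin n`. -/
def qminor (n m : ℕ) (ii jj : Fin m → Fin n) : OqM n :=
  ∑ σ : Equiv.Perm (Fin m),
    ((-(qq ^ 2)) ^ invCount σ) • ((List.finRange m).map (fun r => Zg n (ii r) (jj (σ r)))).prod

/-- The quantum determinant `det_q = ∑_{σ ∈ S_n} (-q²)^{ℓ(σ)} Z_{1σ(1)} ⋯ Z_{nσ(n)}`. -/
def detq (n : ℕ) : OqM n := qminor n n id id

/-- The quantum minor `det_q(t) = det_q({1,…,t}, {n−t+1,…,n})`. -/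
def detqt (n t : ℕ) : OqM n :=
  if h : t ≤ n then
    qminor n t (fun r => ⟨(r : ℕ), lt_of_lt_of_le r.isLt h⟩)
      (fun r => ⟨n - t + (r : ℕ), by have := r.isLt; omega⟩)
  else 0

/-- `det_{q,i}`: the quantum determinant of the subalgebra generated by the `Z_{st}` with
`s,t ∈ {i,…,n}` (`0`-based: `s,t ≥ i`), i.e. the quantum minor `det_q({i,…,n},{i,…,n})`. -/
def detLower (n : ℕ) (i : Fin n) : OqM n :=
  qminor n (n - (i : ℕ)) (fun r => ⟨(i : ℕ) + (r : ℕ), by have := r.isLt; omega⟩)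
    (fun r => ⟨(i : ℕ) + (r : ℕ), by have := r.isLt; omega⟩)

/-- The matrix `E_t`, having the `t × t` identity matrix in the upper right corner and
zeros elsewhere. -/
def Emat (n t : ℕ) : Matrix (Fin n) (Fin n) ℕ :=
  Matrix.of fun i j => if (i : ℕ) < t ∧ (j : ℕ) = n - t + (i : ℕ) then 1 else 0

/-- The partial sums `Pr(A,s,t) = ∑_{i ≤ s, j ≤ t} a_{ij}`. -/
def PrSum {n : ℕ} (A : Matrix (Fin n) (Fin n) ℕ) (s t : Fin n) : ℕ :=
  ∑ i, ∑ j, if i ≤ s ∧ j ≤ t then A i j else 0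

/-- The properties of a bar anti-automorphism, as an additive self-equivalence:
anti-multiplicativity, `ℚ`-linearity, the semilinearity rule `bar(q·x) = q⁻¹·bar(x)`,
and fixing the generators `Z_{ij}`. -/
def IsBarAuto (n : ℕ) (f : OqM n ≃+ OqM n) : Prop :=
  (∀ x y, f (x * y) = f y * f x) ∧
  (∀ (c : ℚ) (x : OqM n), f ((RatFunc.C c) • x) = (RatFunc.C c) • f x) ∧
  (∀ x : OqM n, f (qq • x) = qq⁻¹ • f x) ∧
  (∀ i j, f (Zg n i j) = Zg n i j)

namespace BarAux

open MulOpposite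

/-! ### The field automorphism `τ : q ↦ q⁻¹` of `ℚ(q)` -/

lemma aeval_qq_eq (p : Polynomial ℚ) :
    Polynomial.aeval qq p = algebraMap (Polynomial ℚ) KK p := by
  have h : (Polynomial.aeval qq : Polynomial ℚ →ₐ[ℚ] KK) =
      AlgHom.mk (algebraMap (Polynomial ℚ) KK) (fun c => by
        simp [RatFunc.algebraMap_C, RatFunc.algebraMap_eq_C]) := by
    apply Polynomial.algHom_ext
    simp [qq, RatFunc.algebraMap_X]
  rw [h]; rfl

lemma transc_qq : Transcendental ℚ qq := by
  rw [transcendental_iff_injective]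
  have : ⇑(Polynomial.aeval (R := ℚ) qq) = ⇑(algebraMap (Polynomial ℚ) KK) :=
    funext aeval_qq_eq
  rw [this]
  exact IsFractionRing.injective (Polynomial ℚ) (RatFunc ℚ)

lemma transc_qqinv : Transcendental ℚ (qq⁻¹) := fun h => transc_qq (IsAlgebraic.inv_iff.mp h)

def gtau : Polynomial ℚ →+* KK := (Polynomial.aeval (qq⁻¹ : KK)).toRingHom

lemma gtau_inj : Function.Injective gtau := transcendental_iff_injective.mp transc_qqinv

def tau : KK →+* KK := IsFractionRing.lift (K := RatFunc ℚ) gtau_inj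

lemma tau_algebraMap (p : Polynomial ℚ) :
    tau (algebraMap (Polynomial ℚ) KK p) = Polynomial.aeval (qq⁻¹ : KK) p :=
  IsFractionRing.lift_algebraMap gtau_inj p

lemma tau_X : tau qq = qq⁻¹ := by
  have := tau_algebraMap Polynomial.X
  simpa [RatFunc.algebraMap_X, qq] using this

lemma tau_C (c : ℚ) : tau (RatFunc.C c) = RatFunc.C c := by
  have := tau_algebraMap (Polynomial.C c)
  simpa [RatFunc.algebraMap_C, RatFunc.algebraMap_eq_C] using this

lemma tau_tau (x : KK) : tau (tau x) = x := by
  have : (tau.comp tau) = RingHom.id KK := by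
    apply IsLocalization.ringHom_ext (nonZeroDivisors (Polynomial ℚ))
    refine RingHom.ext fun p => ?_
    simp only [RingHom.comp_apply, RingHom.id_apply, tau_algebraMap]
    rw [Polynomial.aeval_def, Polynomial.hom_eval₂]
    have hc : tau.comp (algebraMap ℚ KK) = algebraMap ℚ KK := by
      ext c; simp [RingHom.comp_apply, ← RatFunc.algebraMap_eq_C, tau_C,
        RatFunc.algebraMap_eq_C]
    rw [hc, map_inv₀, tau_X, inv_inv, ← Polynomial.aeval_def]
    exact aeval_qq_eq p
  exact DFunLike.congr_fun this x

/-! ### The semilinear anti-homomorphism on the free algebra -/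

variable (n : ℕ)

/-- The monoid homomorphism from words to the opposite algebra. -/
def gmon : FreeMonoid (Fin n × Fin n) →* (OqM n)ᵐᵒᵖ :=
  FreeMonoid.lift (fun p => op (Zg n p.1 p.2))

/-- The coefficient map. -/
def fco : KK →+* (OqM n)ᵐᵒᵖ := (algebraMap KK (OqM n)ᵐᵒᵖ).comp tau

lemma fco_comm (c : KK) (w : FreeMonoid (Fin n × Fin n)) :
    Commute (fco n c) (gmon n w) := Algebra.commutes (tau c) (gmon n w)

/-- The semilinear anti-homomorphism from the free algebra to `(OqM n)ᵐᵒᵖ`. -/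
def Psi : FreeAlgebra KK (Fin n × Fin n) →+* (OqM n)ᵐᵒᵖ :=
  (MonoidAlgebra.liftNCRingHom (fco n) (gmon n) (fco_comm n)).comp
    (FreeAlgebra.equivMonoidAlgebraFreeMonoid (R := KK)
      (X := Fin n × Fin n)).toAlgHom.toRingHom

lemma Psi_iota (p : Fin n × Fin n) :
    Psi n (FreeAlgebra.ι KK p) = op (Zg n p.1 p.2) := by
  simp only [Psi, RingHom.comp_apply, AlgHom.toRingHom_eq_coe, RingHom.coe_coe,
    AlgEquiv.toAlgHom_eq_coe, AlgHom.coe_coe]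
  erw [show (FreeAlgebra.equivMonoidAlgebraFreeMonoid (R := KK) (X := Fin n × Fin n))
        (FreeAlgebra.ι KK p)
      = MonoidAlgebra.single (FreeMonoid.of p) (1 : KK) from by
    simp [FreeAlgebra.equivMonoidAlgebraFreeMonoid, MonoidAlgebra.of_apply]]
  rw [MonoidAlgebra.liftNCRingHom]
  show MonoidAlgebra.liftNC _ _ _ = _
  rw [MonoidAlgebra.liftNC_single]
  simp [gmon]

lemma Psi_algebraMap (c : KK) :
    Psi n (algebraMap KK (FreeAlgebra KK (Fin n × Fin n)) c)
      = op (algebraMap KK (OqM n) (tau c)) := by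
  simp only [Psi, RingHom.comp_apply, AlgHom.toRingHom_eq_coe, RingHom.coe_coe,
    AlgEquiv.toAlgHom_eq_coe, AlgHom.coe_coe, AlgEquiv.commutes]
  rw [AlgHom.commutes]
  erw [show (algebraMap KK (MonoidAlgebra KK (FreeMonoid (Fin n × Fin n)))) c
      = MonoidAlgebra.single (1 : FreeMonoid (Fin n × Fin n)) c from rfl]
  rw [MonoidAlgebra.liftNCRingHom]
  show MonoidAlgebra.liftNC _ _ _ = _
  rw [MonoidAlgebra.liftNC_single]
  simp [fco]

lemma Psi_smul (c : KK) (x : FreeAlgebra KK (Fin n × Fin n)) :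
    Psi n (c • x) = op (tau c • (Psi n x).unop) := by
  rw [Algebra.smul_def, map_mul, Psi_algebraMap]
  conv_lhs => rw [← op_unop (Psi n x)]
  rw [← op_mul, Algebra.smul_def, Algebra.commutes]

lemma qq_ne_zero : (qq : KK) ≠ 0 := RatFunc.X_ne_zero

/-! ### Relations in `OqM n` -/

lemma Zrel (x y : FreeAlgebra KK (Fin n × Fin n)) (h : QMRel n x y) :
    RingQuot.mkAlgHom KK (QMRel n) x = RingQuot.mkAlgHom KK (QMRel n) y :=
  RingQuot.mkAlgHom_rel KK h

lemma Z_row (i : Fin n) {j k : Fin n} (h : j < k) :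
    Zg n i j * Zg n i k = (qq ^ 2) • (Zg n i k * Zg n i j) := by
  have := Zrel n _ _ (QMRel.row i h)
  simpa only [map_mul, map_smul, Zg] using this

lemma Z_col (j : Fin n) {i k : Fin n} (h : i < k) :
    Zg n i j * Zg n k j = (qq ^ 2) • (Zg n k j * Zg n i j) := by
  have := Zrel n _ _ (QMRel.col j h)
  simpa only [map_mul, map_smul, Zg] using this

lemma Z_swap {i j s t : Fin n} (h1 : s < i) (h2 : j < t) :
    Zg n i j * Zg n s t = Zg n s t * Zg n i j := by
  have := Zrel n _ _ (QMRel.swap h1 h2)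
  simpa only [map_mul, Zg] using this

lemma Z_mixed {i j s t : Fin n} (h1 : i < s) (h2 : j < t) :
    Zg n i j * Zg n s t = Zg n s t * Zg n i j
      + (qq ^ 2 - qq⁻¹ ^ 2) • (Zg n i t * Zg n s j) := by
  have := Zrel n _ _ (QMRel.mixed h1 h2)
  simpa only [map_mul, map_add, map_smul, Zg] using this

lemma Psi_rel : ∀ ⦃x y⦄, QMRel n x y → Psi n x = Psi n y := by
  intro x y h
  induction h with
  | row i h =>
      rw [map_mul, Psi_iota, Psi_iota, Psi_smul, map_mul, Psi_iota, Psi_iota]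
      rw [← op_mul, ← op_mul, unop_op]
      congr 1
      rw [map_pow, tau_X, Z_row n _ h, smul_smul]
      rw [show (qq⁻¹ ^ 2) * qq ^ 2 = 1 from by rw [← mul_pow, inv_mul_cancel₀ qq_ne_zero, one_pow]]
      rw [one_smul]
  | col j h =>
      rw [map_mul, Psi_iota, Psi_iota, Psi_smul, map_mul, Psi_iota, Psi_iota]
      rw [← op_mul, ← op_mul, unop_op]
      congr 1
      rw [map_pow, tau_X, Z_col n _ h, smul_smul]
      rw [show (qq⁻¹ ^ 2) * qq ^ 2 = 1 from by rw [← mul_pow, inv_mul_cancel₀ qq_ne_zero, one_pow]]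
      rw [one_smul]
  | swap h1 h2 =>
      rw [map_mul, Psi_iota, Psi_iota, map_mul, Psi_iota, Psi_iota]
      rw [← op_mul, ← op_mul]
      congr 1
      exact (Z_swap n h1 h2).symm
  | @mixed i j s t h1 h2 =>
      rw [map_mul, Psi_iota, Psi_iota, map_add, map_mul, Psi_iota, Psi_iota, Psi_smul,
        map_mul, Psi_iota, Psi_iota]
      rw [← op_mul, ← op_mul, ← op_mul, unop_op, ← op_add]
      congr 1
      rw [map_sub, map_pow, map_pow, tau_X, map_inv₀, tau_X, inv_inv]
      rw [Z_mixed n h1 h2, Z_swap n h1 h2, add_assoc, ← add_smul,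
        show (qq ^ 2 - qq⁻¹ ^ 2) + (qq⁻¹ ^ 2 - qq ^ 2) = 0 from by ring, zero_smul, add_zero]

/-! ### The bar map on `OqM n` -/

def barO : OqM n →+* (OqM n)ᵐᵒᵖ := RingQuot.lift ⟨Psi n, Psi_rel n⟩

def bar (x : OqM n) : OqM n := (barO n x).unop

lemma bar_mk (y : FreeAlgebra KK (Fin n × Fin n)) :
    bar n (RingQuot.mkAlgHom KK (QMRel n) y) = (Psi n y).unop := by
  unfold bar barO
  rw [show RingQuot.mkAlgHom KK (QMRel n) y = RingQuot.mkRingHom (QMRel n) y from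
    DFunLike.congr_fun (RingQuot.mkAlgHom_coe KK (QMRel n)) y]
  rw [RingQuot.lift_mkRingHom_apply]

lemma bar_add (x y : OqM n) : bar n (x + y) = bar n x + bar n y := by
  unfold bar; rw [map_add]; rfl

lemma bar_mul (x y : OqM n) : bar n (x * y) = bar n y * bar n x := by
  unfold bar; rw [map_mul]; rfl

lemma bar_one : bar n 1 = 1 := by unfold bar; rw [map_one]; rfl

lemma bar_smul (c : KK) (x : OqM n) : bar n (c • x) = tau c • bar n x := by
  obtain ⟨y, rfl⟩ := RingQuot.mkAlgHom_surjective KK (QMRel n) x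
  rw [← map_smul, bar_mk, bar_mk, Psi_smul, unop_op]

lemma bar_Z (i j : Fin n) : bar n (Zg n i j) = Zg n i j := by
  rw [Zg, bar_mk, Psi_iota]; rfl

lemma bar_algebraMap (c : KK) :
    bar n (algebraMap KK (OqM n) c) = algebraMap KK (OqM n) (tau c) := by
  rw [Algebra.algebraMap_eq_smul_one, bar_smul, bar_one, Algebra.algebraMap_eq_smul_one]

lemma bar_bar (x : OqM n) : bar n (bar n x) = x := by
  obtain ⟨y, rfl⟩ := RingQuot.mkAlgHom_surjective KK (QMRel n) x
  induction y using FreeAlgebra.induction with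
  | grade0 c =>
      rw [AlgHom.commutes, bar_algebraMap, bar_algebraMap, tau_tau]
  | grade1 p =>
      show bar n (bar n (Zg n p.1 p.2)) = Zg n p.1 p.2
      rw [bar_Z, bar_Z]
  | mul a b ha hb =>
      rw [map_mul, bar_mul, bar_mul, ha, hb]
  | add a b ha hb =>
      rw [map_add, bar_add, bar_add, ha, hb]

/-- Bar as an additive self-equivalence. -/
def barEquiv : OqM n ≃+ OqM n where
  toFun := bar n
  invFun := bar n
  left_inv := bar_bar n
  right_inv := bar_bar n
  map_add' := bar_add n

lemma isBarAuto_barEquiv : IsBarAuto n (barEquiv n) := by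
  refine ⟨bar_mul n, ?_, ?_, bar_Z n⟩
  · intro c x
    show bar n _ = _
    rw [bar_smul, tau_C]; rfl
  · intro x
    show bar n _ = _
    rw [bar_smul, tau_X]; rfl

/-! ### Uniqueness -/

variable {n} in
lemma f_one {f : OqM n ≃+ OqM n} (hf : IsBarAuto n f) : f 1 = 1 := by
  have h : ∀ x, f x = f 1 * f x := fun x => by
    conv_lhs => rw [show x = x * 1 from (mul_one x).symm]
    rw [hf.1]
  obtain ⟨y, hy⟩ := f.surjective 1
  calc f 1 = f 1 * 1 := (mul_one _).symm
    _ = f 1 * f y := by rw [hy]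
    _ = f y := (h y).symm
    _ = 1 := hy

variable {n} in
lemma f_semilinear {f : OqM n ≃+ OqM n} (hf : IsBarAuto n f) (c : KK) (x : OqM n) :
    f (c • x) = tau c • f x := by
  let S : Subfield KK :=
    { carrier := {c | ∀ x : OqM n, f (c • x) = tau c • f x}
      zero_mem' := fun x => by simp
      one_mem' := fun x => by simp
      add_mem' := fun {a b} ha hb x => by
        rw [add_smul, map_add, ha, hb, map_add, add_smul]
      neg_mem' := fun {a} ha x => by
        have h1 : (-a) • x = -(a • x) := neg_smul a x
        have h2 : tau (-a) • f x = -(tau a • f x) := by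
          rw [map_neg]; exact neg_smul (tau a) (f x)
        rw [h1, map_neg, ha, h2]
      mul_mem' := fun {a b} ha hb x => by
        rw [mul_smul, ha, hb, map_mul, mul_smul]
      inv_mem' := by
        intro a ha x
        rcases eq_or_ne a 0 with rfl | h0
        · simp
        · have h1 : f x = tau a • f (a⁻¹ • x) := by
            rw [← ha, smul_smul, mul_inv_cancel₀ h0, one_smul]
          have h2 : tau a ≠ 0 := fun h => h0 (by
            have := congrArg tau h
            rwa [tau_tau, map_zero] at this)
          rw [map_inv₀]
          rw [h1, smul_smul, inv_mul_cancel₀ h2, one_smul] }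
  have hC : ∀ c : ℚ, RatFunc.C c ∈ S := fun c x => by rw [hf.2.1, tau_C]
  have hX : qq ∈ S := fun x => by rw [hf.2.2.1, tau_X]
  have hpoly : ∀ p : Polynomial ℚ, algebraMap (Polynomial ℚ) KK p ∈ S := by
    intro p
    induction p using Polynomial.induction_on with
    | C a => rw [RatFunc.algebraMap_C]; exact hC a
    | add p q hp hq => rw [map_add]; exact S.add_mem hp hq
    | monomial m a _ =>
        rw [map_mul, map_pow, RatFunc.algebraMap_C, RatFunc.algebraMap_X]
        exact S.mul_mem (hC a) (S.pow_mem hX _)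
  have : c ∈ S := by
    rw [← RatFunc.num_div_denom c]
    exact S.div_mem (hpoly _) (hpoly _)
  exact this x

variable {n} in
lemma f_eq_bar {f : OqM n ≃+ OqM n} (hf : IsBarAuto n f) (x : OqM n) :
    f x = bar n x := by
  obtain ⟨y, rfl⟩ := RingQuot.mkAlgHom_surjective KK (QMRel n) x
  induction y using FreeAlgebra.induction with
  | grade0 c =>
      rw [AlgHom.commutes, bar_algebraMap, Algebra.algebraMap_eq_smul_one,
        f_semilinear hf, f_one hf, Algebra.algebraMap_eq_smul_one]
  | grade1 p =>
      show f (Zg n p.1 p.2) = bar n (Zg n p.1 p.2)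
      rw [hf.2.2.2, bar_Z]
  | mul a b ha hb => rw [map_mul, hf.1, bar_mul, ha, hb]
  | add a b ha hb => rw [map_add, map_add, bar_add, ha, hb]

end BarAux

/-- There is a unique anti-automorphism `bar` of `O_q(M(n))`, as an
algebra over `ℚ`, with `bar(Z_{ij}) = Z_{ij}` and `bar(q·x) = q⁻¹·bar(x)`; moreover it is
an involution. -/
theorem stmt0 (n : ℕ) :
    (∃! f : OqM n ≃+ OqM n, IsBarAuto n f) ∧
    (∀ f : OqM n ≃+ OqM n, IsBarAuto n f → ∀ x, f (f x) = x) := by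
  constructor
  · refine ⟨BarAux.barEquiv n, BarAux.isBarAuto_barEquiv n, ?_⟩
    intro g hg
    ext x
    exact BarAux.f_eq_bar hg x
  · intro f hf x
    rw [BarAux.f_eq_bar hf, BarAux.f_eq_bar hf, BarAux.bar_bar]
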